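/- Let y ≥ 1 be real, q ≥ 1 an integer, χ₀ the principal Dirichlet character modulo q, α, β ∈ ℂ, and let a : ℕ → ℂ be any function with a(n) = 0 for n > y. For j ≥ 1 set E(α,j) = Σ_{h ≤ y/j} a(hj) χ₀(h) h^{−1−α}, and F(j,s) = Π_{p | j} (1 − p^{−s}). Then Σ_{h,k ≤ y} a(h)a(k) χ₀(hk) (h,k)^{1+α+β} h^{−1−α} k^{−1−β} = Σ_{j ≤ y} j^{−1} F(j, 1+α+β) χ₀(j) E(α,j) E(β,j). -/

import Mathlib

open Complex Finset

noncomputable section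

/-- `F(j,s) = ∏_{p ∣ j} (1 - p^{-s})`. -/
def Ffin (j : ℕ) (s : ℂ) : ℂ := ∏ p ∈ j.primeFactors, (1 - (p : ℂ) ^ (-s))




lemma Ffin_mul_coprime {m n : ℕ} (hm : m ≠ 0) (hn : n ≠ 0) (h : Nat.Coprime m n) (s : ℂ) :
    Ffin (m * n) s = Ffin m s * Ffin n s := by
  unfold Ffin
  rw [Nat.primeFactors_mul hm hn, Finset.prod_union h.disjoint_primeFactors]

lemma Ffin_prime_pow {p : ℕ} (hp : p.Prime) {k : ℕ} (hk : k ≠ 0) (s : ℂ) :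
    Ffin (p ^ k) s = 1 - (p : ℂ) ^ (-s) := by
  unfold Ffin
  rw [Nat.primeFactors_prime_pow hk hp, Finset.prod_singleton]

open ArithmeticFunction in
lemma sum_divisors_cpow_Ffin (s : ℂ) {n : ℕ} (hn : n ≠ 0) :
    ∑ j ∈ n.divisors, (j : ℂ) ^ s * Ffin j s = (n : ℂ) ^ s := by
  classical
  set f : ArithmeticFunction ℂ :=
    ⟨fun j => if j = 0 then 0 else (j : ℂ) ^ s * Ffin j s, if_pos rfl⟩ with hfdef
  set g : ArithmeticFunction ℂ :=
    ⟨fun j => if j = 0 then 0 else (j : ℂ) ^ s, if_pos rfl⟩ with hgdef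
  have hfap : ∀ j : ℕ, j ≠ 0 → f j = (j : ℂ) ^ s * Ffin j s := fun j hj => if_neg hj
  have hgap : ∀ j : ℕ, j ≠ 0 → g j = (j : ℂ) ^ s := fun j hj => if_neg hj
  have hf1 : f 1 = 1 := by
    rw [hfap 1 one_ne_zero]
    simp [Ffin]
  have hg1 : g 1 = 1 := by rw [hgap 1 one_ne_zero]; simp
  have hf : f.IsMultiplicative := by
    rw [ArithmeticFunction.IsMultiplicative.iff_ne_zero]
    refine ⟨hf1, fun {m n} hm hn hmn => ?_⟩
    rw [hfap _ (mul_ne_zero hm hn), hfap _ hm, hfap _ hn,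
      Ffin_mul_coprime hm hn hmn, Nat.cast_mul, natCast_mul_natCast_cpow]
    ring
  have hg : g.IsMultiplicative := by
    rw [ArithmeticFunction.IsMultiplicative.iff_ne_zero]
    refine ⟨hg1, fun {m n} hm hn hmn => ?_⟩
    rw [hgap _ (mul_ne_zero hm hn), hgap _ hm, hgap _ hn, Nat.cast_mul,
      natCast_mul_natCast_cpow]
  have key : f * (ArithmeticFunction.zeta : ArithmeticFunction ℂ) = g := by
    rw [ArithmeticFunction.IsMultiplicative.eq_iff_eq_on_prime_powers _ (hf.mul isMultiplicative_zeta.natCast) _ hg]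
    intro p i hp
    have hp0 : (p : ℂ) ≠ 0 := Nat.cast_ne_zero.mpr hp.ne_zero
    have hps : (p : ℂ) ^ s ≠ 0 := by
      intro h
      exact hp0 (cpow_eq_zero_iff _ _ |>.mp h).1
    rw [coe_mul_zeta_apply, Nat.sum_divisors_prime_pow hp, hgap _ (pow_ne_zero _ hp.ne_zero)]
    -- telescoping
    have hterm : ∀ k : ℕ, f (p ^ (k + 1)) = ((p ^ (k+1) : ℕ) : ℂ) ^ s - ((p ^ k : ℕ) : ℂ) ^ s := by
      intro k
      rw [hfap _ (pow_ne_zero _ hp.ne_zero), Ffin_prime_pow hp (Nat.succ_ne_zero k)]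
      have h1 : ((p ^ (k+1) : ℕ) : ℂ) ^ s = ((p ^ k : ℕ) : ℂ) ^ s * (p : ℂ) ^ s := by
        rw [pow_succ, Nat.cast_mul, natCast_mul_natCast_cpow]
      have h2 : (p : ℂ) ^ s * (p : ℂ) ^ (-s) = 1 := by
        rw [← cpow_add _ _ hp0]; simp
      rw [h1]
      calc ((p ^ k : ℕ) : ℂ) ^ s * (p : ℂ) ^ s * (1 - (p : ℂ) ^ (-s))
          = ((p ^ k : ℕ) : ℂ) ^ s * (p : ℂ) ^ s
            - ((p ^ k : ℕ) : ℂ) ^ s * ((p : ℂ) ^ s * (p : ℂ) ^ (-s)) := by ring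
        _ = _ := by rw [h2, mul_one]
    rw [Finset.sum_range_succ']
    simp only [hterm]
    rw [Finset.sum_range_sub (fun k => ((p ^ k : ℕ) : ℂ) ^ s)]
    have : f (p ^ 0) = 1 := by simpa using hf1
    rw [this]
    simp
  calc ∑ j ∈ n.divisors, (j : ℂ) ^ s * Ffin j s
      = ∑ j ∈ n.divisors, f j :=
        Finset.sum_congr rfl fun j hj => (hfap j (Nat.pos_of_mem_divisors hj).ne').symm
    _ = (f * (ArithmeticFunction.zeta : ArithmeticFunction ℂ)) n := coe_mul_zeta_apply.symm
    _ = g n := by rw [key]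
    _ = (n : ℂ) ^ s := hgap n hn


lemma chi_idem (q : ℕ) (x : ZMod q) :
    (1 : DirichletCharacter ℂ q) x * (1 : DirichletCharacter ℂ q) x
      = (1 : DirichletCharacter ℂ q) x := by
  by_cases hx : IsUnit x
  · rw [MulChar.one_apply hx, mul_one]
  · rw [MulChar.map_nonunit _ hx, mul_zero]

lemma term_eq {q : ℕ} (α β : ℂ) (a : ℕ → ℂ) {j : ℕ} (hj : j ≠ 0) (h' k' : ℕ) :
    a (h' * j) * a (k' * j) *
        (1 : DirichletCharacter ℂ q) (((h' * j) * (k' * j) : ℕ) : ZMod q) *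
        ((j : ℂ) ^ ((1:ℂ) + α + β) * Ffin j (1 + α + β)) *
        ((h' * j : ℕ) : ℂ) ^ (-1 - α) * ((k' * j : ℕ) : ℂ) ^ (-1 - β)
      = (j : ℂ)⁻¹ * Ffin j (1 + α + β) * (1 : DirichletCharacter ℂ q) (j : ZMod q) *
        (a (h' * j) * (1 : DirichletCharacter ℂ q) (h' : ZMod q) * (h' : ℂ) ^ (-1 - α)) *
        (a (k' * j) * (1 : DirichletCharacter ℂ q) (k' : ZMod q) * (k' : ℂ) ^ (-1 - β)) := by
  have hj0 : (j : ℂ) ≠ 0 := Nat.cast_ne_zero.mpr hj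
  have hjpow : (j : ℂ) ^ ((1:ℂ) + α + β) * ((j : ℂ) ^ (-1 - α) * (j : ℂ) ^ (-1 - β))
      = (j : ℂ)⁻¹ := by
    rw [← cpow_add _ _ hj0, ← cpow_add _ _ hj0]
    have : (1:ℂ) + α + β + (-1 - α + (-1 - β)) = -1 := by ring
    rw [this, cpow_neg_one]
  have hcast : (((h' * j) * (k' * j) : ℕ) : ZMod q) = ((h' : ZMod q) * j) * ((k' : ZMod q) * j) := by
    push_cast; ring
  rw [hcast, map_mul, map_mul, map_mul]
  rw [Nat.cast_mul, Nat.cast_mul, natCast_mul_natCast_cpow, natCast_mul_natCast_cpow]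
  set w := (1 : DirichletCharacter ℂ q) (j : ZMod q)
  have hw : w * w = w := chi_idem q _
  linear_combination
    (a (h' * j) * a (k' * j) * (1 : DirichletCharacter ℂ q) (h' : ZMod q) *
      (1 : DirichletCharacter ℂ q) (k' : ZMod q) * Ffin j (1 + α + β) *
      (h' : ℂ) ^ (-1 - α) * (k' : ℂ) ^ (-1 - β)) *
      (w * w * hjpow + (j : ℂ)⁻¹ * hw)
/-- `E(α,j) = ∑_{h ≤ y/j} a(hj) χ₀(h) h^{-1-α}`. -/
def Ecoef (q : ℕ) (a : ℕ → ℂ) (y : ℝ) (α : ℂ) (j : ℕ) : ℂ :=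
  ∑ h ∈ Finset.Icc 1 ⌊y / (j : ℝ)⌋₊,
    a (h * j) * (1 : DirichletCharacter ℂ q) (h : ZMod q) * (h : ℂ) ^ (-1 - α)

/-- **The gcd decomposition of `Σ(α,β)`**:
`∑_{h,k ≤ y} a(h)a(k) χ₀(hk) (h,k)^{1+α+β} h^{-1-α} k^{-1-β}
  = ∑_{j ≤ y} j^{-1} F(j,1+α+β) χ₀(j) E(α,j) E(β,j)`. -/
theorem sigma_decomposition (y : ℝ) (hy : 1 ≤ y) (q : ℕ) (hq : 1 ≤ q) (α β : ℂ)
    (a : ℕ → ℂ) (ha : ∀ n : ℕ, y < (n : ℝ) → a n = 0) :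
    ∑ h ∈ Finset.Icc 1 ⌊y⌋₊, ∑ k ∈ Finset.Icc 1 ⌊y⌋₊,
      a h * a k * (1 : DirichletCharacter ℂ q) ((h * k : ℕ) : ZMod q) *
        (Nat.gcd h k : ℂ) ^ ((1 : ℂ) + α + β) * (h : ℂ) ^ (-1 - α) * (k : ℂ) ^ (-1 - β) =
    ∑ j ∈ Finset.Icc 1 ⌊y⌋₊,
      (j : ℂ)⁻¹ * Ffin j (1 + α + β) * (1 : DirichletCharacter ℂ q) (j : ZMod q) *
        Ecoef q a y α j * Ecoef q a y β j := by
  classical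
  have hy0 : (0:ℝ) ≤ y := zero_le_one.trans hy
  have hfloor : ∀ j m : ℕ, 0 < j → (m ≤ ⌊y / (j:ℝ)⌋₊ ↔ m * j ≤ ⌊y⌋₊) := by
    intro j m hj
    have hj' : (0:ℝ) < j := by exact_mod_cast hj
    rw [Nat.le_floor_iff (by positivity), le_div_iff₀ hj', Nat.le_floor_iff hy0, Nat.cast_mul]
  -- LHS as a sum over a sigma finset
  set T1 : Finset ((_ : ℕ × ℕ) × ℕ) :=
    (Finset.Icc 1 ⌊y⌋₊ ×ˢ Finset.Icc 1 ⌊y⌋₊).sigma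
      (fun p => (Nat.gcd p.1 p.2).divisors) with hT1
  set T2 : Finset ((_ : ℕ) × ℕ × ℕ) :=
    (Finset.Icc 1 ⌊y⌋₊).sigma
      (fun j => Finset.Icc 1 ⌊y / (j:ℝ)⌋₊ ×ˢ Finset.Icc 1 ⌊y / (j:ℝ)⌋₊) with hT2
  set f1 : ((_ : ℕ × ℕ) × ℕ) → ℂ := fun x =>
    a x.1.1 * a x.1.2 * (1 : DirichletCharacter ℂ q) ((x.1.1 * x.1.2 : ℕ) : ZMod q) *
      ((x.2 : ℂ) ^ ((1:ℂ) + α + β) * Ffin x.2 (1 + α + β)) *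
      (x.1.1 : ℂ) ^ (-1 - α) * (x.1.2 : ℂ) ^ (-1 - β) with hf1
  set f2 : ((_ : ℕ) × ℕ × ℕ) → ℂ := fun x =>
    (x.1 : ℂ)⁻¹ * Ffin x.1 (1 + α + β) * (1 : DirichletCharacter ℂ q) (x.1 : ZMod q) *
      (a (x.2.1 * x.1) * (1 : DirichletCharacter ℂ q) (x.2.1 : ZMod q) *
        (x.2.1 : ℂ) ^ (-1 - α)) *
      (a (x.2.2 * x.1) * (1 : DirichletCharacter ℂ q) (x.2.2 : ZMod q) *
        (x.2.2 : ℂ) ^ (-1 - β)) with hf2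
  have hL : (∑ h ∈ Finset.Icc 1 ⌊y⌋₊, ∑ k ∈ Finset.Icc 1 ⌊y⌋₊,
      a h * a k * (1 : DirichletCharacter ℂ q) ((h * k : ℕ) : ZMod q) *
        (Nat.gcd h k : ℂ) ^ ((1 : ℂ) + α + β) * (h : ℂ) ^ (-1 - α) * (k : ℂ) ^ (-1 - β))
      = ∑ x ∈ T1, f1 x := by
    rw [hT1, Finset.sum_sigma]
    rw [Finset.sum_product]
    refine Finset.sum_congr rfl fun h hh => Finset.sum_congr rfl fun k hk => ?_
    have hh1 : 1 ≤ h := (Finset.mem_Icc.mp hh).1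
    have hgcd : Nat.gcd h k ≠ 0 := Nat.gcd_ne_zero_left (by omega)
    rw [← sum_divisors_cpow_Ffin (1 + α + β) hgcd]
    rw [Finset.mul_sum, Finset.sum_mul, Finset.sum_mul]
  have hR : (∑ j ∈ Finset.Icc 1 ⌊y⌋₊,
      (j : ℂ)⁻¹ * Ffin j (1 + α + β) * (1 : DirichletCharacter ℂ q) (j : ZMod q) *
        Ecoef q a y α j * Ecoef q a y β j) = ∑ x ∈ T2, f2 x := by
    rw [hT2, Finset.sum_sigma]
    refine Finset.sum_congr rfl fun j hj => ?_
    rw [Finset.sum_product]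
    unfold Ecoef
    simp only [Finset.mul_sum, Finset.sum_mul]
    rw [Finset.sum_comm]
  rw [hL, hR]
  refine (Finset.sum_nbij' (fun x => ⟨(x.2.1 * x.1, x.2.2 * x.1), x.1⟩)
    (fun x => ⟨x.2, (x.1.1 / x.2, x.1.2 / x.2)⟩) ?_ ?_ ?_ ?_ ?_).symm
  · rintro ⟨j, h', k'⟩ hx
    simp only [hT1, hT2, Finset.mem_sigma, Finset.mem_product, Finset.mem_Icc,
      Nat.mem_divisors] at hx ⊢
    obtain ⟨⟨hj1, hjN⟩, ⟨hh1, hhf⟩, hk1, hkf⟩ := hx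
    have hhN : h' * j ≤ ⌊y⌋₊ := (hfloor j h' (by omega)).mp hhf
    have hkN : k' * j ≤ ⌊y⌋₊ := (hfloor j k' (by omega)).mp hkf
    refine ⟨⟨⟨?_, hhN⟩, ?_, hkN⟩, ?_, ?_⟩
    · exact Nat.one_le_iff_ne_zero.mpr (by positivity)
    · exact Nat.one_le_iff_ne_zero.mpr (by positivity)
    · exact Nat.dvd_gcd (dvd_mul_left j h') (dvd_mul_left j k')
    · exact Nat.gcd_ne_zero_left (by positivity)
  · rintro ⟨⟨h, k⟩, j⟩ hx
    simp only [hT1, hT2, Finset.mem_sigma, Finset.mem_product, Finset.mem_Icc,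
      Nat.mem_divisors] at hx ⊢
    obtain ⟨⟨⟨hh1, hhN⟩, ⟨hk1, hkN⟩⟩, hjd, hg0⟩ := hx
    have hjh : j ∣ h := hjd.trans (Nat.gcd_dvd_left _ _)
    have hjk : j ∣ k := hjd.trans (Nat.gcd_dvd_right _ _)
    have hj1 : 1 ≤ j := Nat.pos_of_ne_zero (fun h0 => hg0 (by
      subst h0; exact Nat.eq_zero_of_zero_dvd hjd))
    have hjN : j ≤ ⌊y⌋₊ := le_trans (Nat.le_of_dvd (by omega) hjh) hhN
    refine ⟨⟨hj1, hjN⟩, ⟨?_, ?_⟩, ?_, ?_⟩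
    · exact Nat.one_le_div_iff (by omega) |>.mpr (Nat.le_of_dvd (by omega) hjh)
    · exact (hfloor j _ (by omega)).mpr (by rw [Nat.div_mul_cancel hjh]; exact hhN)
    · exact Nat.one_le_div_iff (by omega) |>.mpr (Nat.le_of_dvd (by omega) hjk)
    · exact (hfloor j _ (by omega)).mpr (by rw [Nat.div_mul_cancel hjk]; exact hkN)
  · rintro ⟨j, h', k'⟩ hx
    simp only [hT2, Finset.mem_sigma, Finset.mem_product, Finset.mem_Icc] at hx
    have hj1 : 1 ≤ j := hx.1.1
    simp [Nat.mul_div_cancel _ (by omega : 0 < j)]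
  · rintro ⟨⟨h, k⟩, j⟩ hx
    simp only [hT1, Finset.mem_sigma, Finset.mem_product, Finset.mem_Icc,
      Nat.mem_divisors] at hx
    obtain ⟨-, hjd, hg0⟩ := hx
    have hjh : j ∣ h := hjd.trans (Nat.gcd_dvd_left _ _)
    have hjk : j ∣ k := hjd.trans (Nat.gcd_dvd_right _ _)
    simp [Nat.div_mul_cancel hjh, Nat.div_mul_cancel hjk]
  · rintro ⟨j, h', k'⟩ hx
    simp only [hT2, Finset.mem_sigma, Finset.mem_product, Finset.mem_Icc] at hx
    have hj0 : j ≠ 0 := by have := hx.1.1; omega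
    have := term_eq (q := q) α β a hj0 h' k'
    simpa [hf1, hf2] using this.symm
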